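/- Let k ≥ 1 and ℓ ≥ k. Then for every i ∈ {1,…,k}, the identity ∑_{j=0}^{k−1} N(ℓ,j)·x_i^{2^j} = D·x_i^{2^ℓ} holds in F₂[x_1,…,x_k]. (This expresses that the quotient polynomials p_{ℓ,j} = N(ℓ,j)/D solve the Cramer system of Theorem 1.) -/

import Mathlib

open MvPolynomial

/-- `Vdm k t` is the determinant of the `k × k` matrix whose `(i, j)` entry is `xᵢ ^ t j`,
in `F₂[x₁, …, x_k]`. -/
noncomputable def Vdm (k : ℕ) (t : Fin k → ℕ) : MvPolynomial (Fin k) (ZMod 2) :=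
  Matrix.det (Matrix.of fun i j : Fin k => (X i : MvPolynomial (Fin k) (ZMod 2)) ^ t j)

/-- `D k = V(2^0, 2^1, …, 2^(k-1))`. -/
noncomputable def D (k : ℕ) : MvPolynomial (Fin k) (ZMod 2) :=
  Vdm k fun j => 2 ^ (j : ℕ)

/-- `N k ℓ j` is the Vandermonde determinant whose exponent tuple lists the 2-powers
`2^0, …, 2^(k-1)` with `2^j` omitted, followed by `2^ℓ`. -/
noncomputable def N (k ℓ j : ℕ) : MvPolynomial (Fin k) (ZMod 2) :=
  Vdm k fun i =>
    if (i : ℕ) + 1 < k then (if (i : ℕ) < j then 2 ^ (i : ℕ) else 2 ^ ((i : ℕ) + 1))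
    else 2 ^ ℓ

/- `G k m` is the sum of all monomials of total degree `m` in `x₁, …, x_k` in which
every nonzero exponent is a power of 2. -/
open Classical in
noncomputable def G (k m : ℕ) : MvPolynomial (Fin k) (ZMod 2) :=
  ∑ d : Fin k → Fin (m + 1),
    if (∑ i, (d i : ℕ)) = m ∧ ∀ i, (d i : ℕ) ≠ 0 → ∃ e, (d i : ℕ) = 2 ^ e then
      ∏ i, (X i : MvPolynomial (Fin k) (ZMod 2)) ^ (d i : ℕ)
    else 0

theorem stmt3 (k ℓ : ℕ) (hk : 1 ≤ k) (hℓ : k ≤ ℓ) (i : Fin k) :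
    ∑ j ∈ Finset.range k, N k ℓ j * X i ^ (2 ^ j) = D k * X i ^ (2 ^ ℓ) := by
  classical
  set R := MvPolynomial (Fin k) (ZMod 2) with hR
  let t : Fin (k+1) → ℕ := fun c => if (c : ℕ) < k then 2 ^ (c : ℕ) else 2 ^ ℓ
  let A : Matrix (Fin (k+1)) (Fin (k+1)) R :=
    Matrix.of fun r c =>
      (X (if h : (r : ℕ) < k then (⟨(r : ℕ), h⟩ : Fin k) else i) : R) ^ t c
  have hdet : A.det = 0 := by
    apply Matrix.det_zero_of_row_eq (i := Fin.castSucc ⟨(i : ℕ), i.isLt⟩)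
      (j := Fin.last k)
    · intro h
      have := congrArg (Fin.val) h
      simp [Fin.last] at this
      omega
    · funext c
      simp only [A, Matrix.of_apply, Fin.coe_castSucc, Fin.val_last]
      rw [dif_pos i.isLt, dif_neg (lt_irrefl k)]
  have hexp : A.det = ∑ j : Fin (k+1), (-1 : R) ^ ((Fin.last k : ℕ) + (j : ℕ)) *
      A (Fin.last k) j * (A.submatrix (Fin.last k).succAbove j.succAbove).det :=
    Matrix.det_succ_row A (Fin.last k)
  have hneg : ∀ n : ℕ, ((-1 : R) ^ n) = 1 := by
    intro n
    have : (-1 : R) = 1 := CharTwo.neg_eq 1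
    rw [this, one_pow]
  have hminor_last :
      (A.submatrix (Fin.last k).succAbove (Fin.last k).succAbove).det = D k := by
    rw [D, Vdm]
    congr 1
    ext a b
    simp only [Matrix.submatrix_apply, Fin.succAbove_last, A, Matrix.of_apply]
    rw [dif_pos (by simpa using a.isLt)]
    have hb : t (Fin.castSucc b) = 2 ^ (b : ℕ) := by
      simp [t, b.isLt]
    rw [hb]
    congr 1
  have hminor : ∀ j₀ : Fin k,
      (A.submatrix (Fin.last k).succAbove (Fin.castSucc j₀).succAbove).det
        = N k ℓ (j₀ : ℕ) := by
    intro j₀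
    rw [N, Vdm]
    congr 1
    ext a b
    simp only [Matrix.submatrix_apply, Fin.succAbove_last, A, Matrix.of_apply]
    rw [dif_pos (by simpa using a.isLt)]
    have hb : t ((Fin.castSucc j₀).succAbove b)
        = (if (b : ℕ) + 1 < k then (if (b : ℕ) < (j₀ : ℕ) then 2 ^ (b : ℕ)
            else 2 ^ ((b : ℕ) + 1)) else 2 ^ ℓ) := by
      rw [Fin.succAbove]
      split_ifs with h1 h2 h3 h2 h3
      · simp [t, b.isLt]
      · simp only [Fin.lt_def, Fin.coe_castSucc] at h1; omega
      · simp only [Fin.lt_def, Fin.coe_castSucc] at h1; omega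
      · simp only [Fin.lt_def, Fin.coe_castSucc] at h1
        have hb0 : (j₀ : ℕ) < k := j₀.isLt
        omega
      · simp [t, Fin.val_succ, h2]
      · simp only [t, Fin.val_succ]
        rw [if_neg (by omega)]
    rw [hb]
    congr 1
  have hAlast : ∀ c : Fin (k+1), A (Fin.last k) c = (X i : R) ^ t c := by
    intro c
    simp only [A, Matrix.of_apply, Fin.val_last]
    rw [dif_neg (lt_irrefl k)]
  rw [hdet] at hexp
  rw [Fin.sum_univ_castSucc] at hexp
  simp only [hneg, one_mul, hminor_last, hAlast] at hexp
  have htlast : t (Fin.last k) = 2 ^ ℓ := by simp [t]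
  have hsum : ∑ j : Fin k, (X i : R) ^ t (Fin.castSucc j) *
      (A.submatrix (Fin.last k).succAbove (Fin.castSucc j).succAbove).det
      = ∑ j ∈ Finset.range k, N k ℓ j * X i ^ (2 ^ j) := by
    rw [Finset.sum_range fun j => N k ℓ j * X i ^ (2 ^ j)]
    refine Finset.sum_congr rfl fun j _ => ?_
    rw [hminor j]
    have : t (Fin.castSucc j) = 2 ^ (j : ℕ) := by simp [t, j.isLt]
    rw [this, mul_comm]
  rw [hsum, htlast] at hexp
  have h2 : (0 : R) = (∑ j ∈ Finset.range k, N k ℓ j * X i ^ 2 ^ j) +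
      (X i : R) ^ 2 ^ ℓ * D k := hexp
  have h3 := h2.symm
  rw [CharTwo.add_eq_iff_eq_add, zero_add] at h3
  rw [h3, mul_comm]
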